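/- Let m ≥ 1, let Ψ be a set of pairs of probability measures on ℝ^m, let ε > 0, W > 0 and δ ∈ [0, 1]. Suppose that for every pair (μᵢ, μⱼ) ∈ Ψ the measures μᵢ and μⱼ are (W, δ)-close. Then the additive-noise mechanism with noise Lapₘ(W/ε) satisfies (ε, δ)-distribution privacy with respect to Ψ: for every pair (μᵢ, μⱼ) ∈ Ψ and every measurable set S ⊆ ℝ^m, (μᵢ ∗ Lapₘ(W/ε))(S) ≤ e^ε · (μⱼ ∗ Lapₘ(W/ε))(S) + δ. -/

import Mathlib

open MeasureTheory ProbabilityTheory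
open scoped ENNReal

/-- The Laplace measure on `ℝ^m` with scale `b`: `m` i.i.d. Laplace(`b`) coordinates. -/
noncomputable def lapPi (m : ℕ) (b : ℝ) : Measure (Fin m → ℝ) :=
  MeasureTheory.volume.withDensity
    (fun x => ENNReal.ofReal (∏ k, (1 / (2 * b)) * Real.exp (-|x k| / b)))

/-- Convolution of two measures on `ℝ^m`: the law of `X + Z` with `X ∼ μ`, `Z ∼ ν` independent. -/
noncomputable def mconv {m : ℕ} (μ ν : Measure (Fin m → ℝ)) : Measure (Fin m → ℝ) :=
  (μ.prod ν).map (fun p => p.1 + p.2)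

/-- The `L¹` norm on `ℝ^m`. -/
def l1norm {m : ℕ} (x : Fin m → ℝ) : ℝ := ∑ k, |x k|

/-- `γ` is a coupling of `μ` and `ν`. -/
def IsCoupling {m : ℕ} (γ : Measure ((Fin m → ℝ) × (Fin m → ℝ)))
    (μ ν : Measure (Fin m → ℝ)) : Prop :=
  γ.map Prod.fst = μ ∧ γ.map Prod.snd = ν

/-- `μ` and `ν` are `(W, δ)`-close: there are a coupling `γ` and a measurable set `R`
with `γ(R) ≥ 1 − δ` and `‖x − y‖₁ ≤ W` for all `(x, y) ∈ R`. -/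
def WDClose {m : ℕ} (μ ν : Measure (Fin m → ℝ)) (W δ : ℝ) : Prop :=
  ∃ γ : Measure ((Fin m → ℝ) × (Fin m → ℝ)), IsCoupling γ μ ν ∧
    ∃ R : Set ((Fin m → ℝ) × (Fin m → ℝ)), MeasurableSet R ∧
      ENNReal.ofReal (1 - δ) ≤ γ R ∧ ∀ xy ∈ R, l1norm (xy.1 - xy.2) ≤ W

/-! ### Auxiliary lemmas -/

/-- The one-dimensional Laplace density is integrable. -/
lemma lap1_integrable {b : ℝ} (hb : 0 < b) :
    Integrable (fun t : ℝ => (1 / (2 * b)) * Real.exp (-|t| / b)) := by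
  have habs : Integrable (fun t : ℝ => Real.exp (-|t| / b)) := by
    have hIoi : IntegrableOn (fun t : ℝ => Real.exp (-|t| / b)) (Set.Ioi 0) := by
      have h := exp_neg_integrableOn_Ioi 0 (show (0:ℝ) < 1 / b by positivity)
      refine h.congr_fun (fun t ht => ?_) measurableSet_Ioi
      rw [abs_of_pos (by exact ht)]
      ring_nf
    have hIic : IntegrableOn (fun t : ℝ => Real.exp (-|t| / b)) (Set.Iic 0) := by
      rw [← Measure.map_neg_eq_self (volume : Measure ℝ)]
      have hemb : MeasurableEmbedding fun x : ℝ => -x :=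
        (Homeomorph.neg ℝ).measurableEmbedding
      rw [hemb.integrableOn_map_iff]
      simp only [Function.comp_def, abs_neg, Set.neg_preimage, Set.neg_Iic, neg_zero]
      rw [integrableOn_Ici_iff_integrableOn_Ioi]
      exact hIoi
    have : IntegrableOn (fun t : ℝ => Real.exp (-|t| / b)) (Set.Iic 0 ∪ Set.Ioi 0) :=
      hIic.union hIoi
    rwa [Set.Iic_union_Ioi, integrableOn_univ] at this
  exact habs.const_mul _

/-- The one-dimensional Laplace density integrates to 1. -/
lemma lap1_integral {b : ℝ} (hb : 0 < b) :
    ∫ t : ℝ, (1 / (2 * b)) * Real.exp (-|t| / b) = 1 := by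
  rw [MeasureTheory.integral_const_mul]
  have h1 : ∫ t : ℝ, Real.exp (-|t| / b) = 2 * ∫ t in Set.Ioi (0:ℝ), Real.exp (-t / b) :=
    integral_comp_abs (f := fun t => Real.exp (-t / b))
  have h2 : ∫ t in Set.Ioi (0:ℝ), Real.exp (-t / b) = b := by
    have h := integral_comp_mul_left_Ioi (fun x : ℝ => Real.exp (-x)) 0
      (show (0:ℝ) < b⁻¹ by positivity)
    simp only [mul_zero, smul_eq_mul, inv_inv] at h
    have heq : ∀ t : ℝ, Real.exp (-(b⁻¹ * t)) = Real.exp (-t / b) := by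
      intro t; rw [neg_div, div_eq_inv_mul]
    simp only [heq] at h
    rw [h, integral_exp_neg_Ioi_zero, mul_one]
  rw [h1, h2]
  field_simp

/-- The total mass of `lapPi` is 1. -/
lemma lapPi_univ {m : ℕ} {b : ℝ} (hb : 0 < b) : lapPi m b Set.univ = 1 := by
  have hpos : ∀ x : Fin m → ℝ, 0 ≤ ∏ k, (1 / (2 * b)) * Real.exp (-|x k| / b) := by
    intro x
    exact Finset.prod_nonneg fun k _ => by positivity
  have hint : Integrable (fun x : Fin m → ℝ => ∏ k, (1 / (2 * b)) * Real.exp (-|x k| / b)) :=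
    Integrable.fintype_prod (f := fun _ t => (1 / (2 * b)) * Real.exp (-|t| / b))
      (fun _ => lap1_integrable hb)
  have key := MeasureTheory.ofReal_integral_eq_lintegral_ofReal hint
    (Filter.Eventually.of_forall hpos)
  rw [lapPi, withDensity_apply _ MeasurableSet.univ, Measure.restrict_univ, ← key, MeasureTheory.volume_pi,
    integral_fintype_prod_eq_prod (ι := Fin m) (fun _ t => (1 / (2 * b)) * Real.exp (-|t| / b))]
  rw [Finset.prod_congr rfl (fun (k : Fin m) _ => lap1_integral hb), Finset.prod_const_one,
    ENNReal.ofReal_one]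

/-- Translation formula for `lapPi`. -/
lemma lapPi_translate {m : ℕ} {b : ℝ} (hb : 0 < b) (x : Fin m → ℝ)
    {S : Set (Fin m → ℝ)} (hS : MeasurableSet S) :
    lapPi m b {z | x + z ∈ S}
      = ∫⁻ w in S, ENNReal.ofReal (∏ k, (1 / (2 * b)) * Real.exp (-|w k - x k| / b)) := by
  have hA : MeasurableSet {z : Fin m → ℝ | x + z ∈ S} :=
    (measurable_id.const_add x) hS
  set f : (Fin m → ℝ) → ℝ≥0∞ :=
    fun z => ENNReal.ofReal (∏ k, (1 / (2 * b)) * Real.exp (-|z k| / b)) with hf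
  set h : (Fin m → ℝ) → ℝ≥0∞ :=
    S.indicator (fun w => ENNReal.ofReal (∏ k, (1 / (2 * b)) * Real.exp (-|w k - x k| / b)))
    with hh
  have hpoint : ∀ z, ({z : Fin m → ℝ | x + z ∈ S}).indicator f z = h (x + z) := by
    intro z
    by_cases hz : x + z ∈ S
    · have hz' : z ∈ {z : Fin m → ℝ | x + z ∈ S} := hz
      rw [Set.indicator_of_mem hz', hh, Set.indicator_of_mem hz, hf]
      simp only [Pi.add_apply, add_sub_cancel_left]
    · have hz' : z ∉ {z : Fin m → ℝ | x + z ∈ S} := hz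
      rw [Set.indicator_of_notMem hz', hh, Set.indicator_of_notMem hz]
  calc lapPi m b {z | x + z ∈ S}
      = ∫⁻ z in {z | x + z ∈ S}, f z := by rw [lapPi, withDensity_apply _ hA]
    _ = ∫⁻ z, ({z : Fin m → ℝ | x + z ∈ S}).indicator f z := (lintegral_indicator hA f).symm
    _ = ∫⁻ z, h (x + z) := by simp_rw [hpoint]
    _ = ∫⁻ w, h w := lintegral_add_left_eq_self h x
    _ = ∫⁻ w in S, ENNReal.ofReal (∏ k, (1 / (2 * b)) * Real.exp (-|w k - x k| / b)) :=
        lintegral_indicator hS _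

/-- Pointwise density ratio bound. -/
lemma lap_density_ratio {m : ℕ} {b W ε : ℝ} (hb : 0 < b) (hWb : W / b ≤ ε)
    (x y w : Fin m → ℝ) (hxy : ∑ k, |x k - y k| ≤ W) :
    (∏ k, (1 / (2 * b)) * Real.exp (-|w k - x k| / b))
      ≤ Real.exp ε * ∏ k, (1 / (2 * b)) * Real.exp (-|w k - y k| / b) := by
  have hcard : (Finset.univ : Finset (Fin m)).card = m := by simp
  have hL : (∏ k, (1 / (2 * b)) * Real.exp (-|w k - x k| / b))
      = (1 / (2 * b)) ^ m * Real.exp (∑ k, -|w k - x k| / b) := by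
    rw [Finset.prod_mul_distrib, Finset.prod_const, hcard, Real.exp_sum]
  have hRr : (∏ k, (1 / (2 * b)) * Real.exp (-|w k - y k| / b))
      = (1 / (2 * b)) ^ m * Real.exp (∑ k, -|w k - y k| / b) := by
    rw [Finset.prod_mul_distrib, Finset.prod_const, hcard, Real.exp_sum]
  rw [hL, hRr, mul_left_comm (Real.exp ε) ((1 / (2 * b)) ^ m), ← Real.exp_add]
  refine mul_le_mul_of_nonneg_left ?_ (by positivity)
  apply Real.exp_le_exp.mpr
  have hsum : ∑ k, |w k - y k| - ∑ k, |w k - x k| ≤ W := by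
    rw [← Finset.sum_sub_distrib]
    calc ∑ k, (|w k - y k| - |w k - x k|) ≤ ∑ k, |x k - y k| := by
          refine Finset.sum_le_sum fun k _ => ?_
          have h := abs_sub_abs_le_abs_sub (w k - y k) (w k - x k)
          have : w k - y k - (w k - x k) = x k - y k := by ring
          rwa [this] at h
      _ ≤ W := hxy
  have hA : ∑ k, -|w k - x k| / b = -(∑ k, |w k - x k|) / b := by
    rw [← Finset.sum_div, ← Finset.sum_neg_distrib]
  have hB : ∑ k, -|w k - y k| / b = -(∑ k, |w k - y k|) / b := by
    rw [← Finset.sum_div, ← Finset.sum_neg_distrib]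
  have key : (∑ k, |w k - y k|) / b - (∑ k, |w k - x k|) / b ≤ ε := by
    rw [← sub_div]
    exact le_trans ((div_le_div_iff_of_pos_right hb).mpr hsum) hWb
  rw [hA, hB, neg_div, neg_div]
  linarith [key]

/-- Key one-step bound: shifting the Laplace noise by `≤ W` in `ℓ¹` costs at most `e^ε`. -/
lemma lapPi_shift_bound {m : ℕ} {b W ε : ℝ} (hb : 0 < b) (hWb : W / b ≤ ε)
    (x y : Fin m → ℝ) (hxy : ∑ k, |x k - y k| ≤ W)
    {S : Set (Fin m → ℝ)} (hS : MeasurableSet S) :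
    lapPi m b {z | x + z ∈ S}
      ≤ ENNReal.ofReal (Real.exp ε) * lapPi m b {z | y + z ∈ S} := by
  rw [lapPi_translate hb x hS, lapPi_translate hb y hS]
  calc ∫⁻ w in S, ENNReal.ofReal (∏ k, (1 / (2 * b)) * Real.exp (-|w k - x k| / b))
      ≤ ∫⁻ w in S, ENNReal.ofReal (Real.exp ε)
          * ENNReal.ofReal (∏ k, (1 / (2 * b)) * Real.exp (-|w k - y k| / b)) := by
        refine lintegral_mono fun w => ?_
        rw [← ENNReal.ofReal_mul (Real.exp_nonneg ε)]
        exact ENNReal.ofReal_le_ofReal (lap_density_ratio hb hWb x y w hxy)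
    _ = ENNReal.ofReal (Real.exp ε)
          * ∫⁻ w in S, ENNReal.ofReal (∏ k, (1 / (2 * b)) * Real.exp (-|w k - y k| / b)) := by
        rw [MeasureTheory.lintegral_const_mul' (ENNReal.ofReal (Real.exp ε)) _
          ENNReal.ofReal_ne_top]

/-- **Approximate Wasserstein Mechanism** (Theorem 3.4): if every pair `(μᵢ, μⱼ) ∈ Ψ`
is `(W, δ)`-close, then adding `Lapₘ(W/ε)` noise gives `(ε, δ)`-distribution privacy
with respect to `Ψ`. -/
theorem approximate_wasserstein_mechanism
    (m : ℕ) (hm : 1 ≤ m)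
    (Ψ : Set (Measure (Fin m → ℝ) × Measure (Fin m → ℝ)))
    (ε W δ : ℝ) (hε : 0 < ε) (hW : 0 < W) (hδ : 0 ≤ δ ∧ δ ≤ 1)
    (hprob : ∀ p ∈ Ψ, IsProbabilityMeasure p.1 ∧ IsProbabilityMeasure p.2)
    (hclose : ∀ p ∈ Ψ, WDClose p.1 p.2 W δ) :
    ∀ p ∈ Ψ, ∀ S : Set (Fin m → ℝ), MeasurableSet S →
      mconv p.1 (lapPi m (W / ε)) S
        ≤ ENNReal.ofReal (Real.exp ε) * mconv p.2 (lapPi m (W / ε)) S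
          + ENNReal.ofReal δ := by
  intro p hp S hS
  obtain ⟨hμ, hν⟩ := hprob p hp
  obtain ⟨γ, ⟨hγ1, hγ2⟩, R, hR, hRmass, hRW⟩ := hclose p hp
  set b : ℝ := W / ε with hbdef
  have hb : 0 < b := div_pos hW hε
  have hWb : W / b ≤ ε := by
    have : W / b = ε := by rw [hbdef]; field_simp
    exact this.le
  set ζ : Measure (Fin m → ℝ) := lapPi m b with hζ
  haveI hζsf : SFinite ζ := by
    rw [hζ, lapPi]; infer_instance
  set μ : Measure (Fin m → ℝ) := p.1
  set ν : Measure (Fin m → ℝ) := p.2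
  -- measurability of addition
  have hadd : Measurable fun q : (Fin m → ℝ) × (Fin m → ℝ) => q.1 + q.2 :=
    measurable_fst.add measurable_snd
  have hs : MeasurableSet ((fun q : (Fin m → ℝ) × (Fin m → ℝ) => q.1 + q.2) ⁻¹' S) :=
    hadd hS
  -- the kernel functions
  set F : (Fin m → ℝ) → ℝ≥0∞ := fun x => ζ {z | x + z ∈ S} with hFdef
  have hF : Measurable F := by
    have := measurable_measure_prodMk_left
      (ν := ζ) (s := (fun q : (Fin m → ℝ) × (Fin m → ℝ) => q.1 + q.2) ⁻¹' S) hs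
    exact this
  -- convolution as an integral of F
  have hconv : ∀ (ρ : Measure (Fin m → ℝ)), mconv ρ ζ S = ∫⁻ x, F x ∂ρ := by
    intro ρ
    rw [mconv, Measure.map_apply hadd hS, Measure.prod_apply hs]
    rfl
  -- γ is a probability measure
  have hγuniv : γ Set.univ = 1 := by
    have h1 : γ.map Prod.fst Set.univ = γ Set.univ := by
      rw [Measure.map_apply measurable_fst MeasurableSet.univ, Set.preimage_univ]
    rw [← h1, hγ1]
    exact measure_univ
  -- rewrite both convolutions as integrals over γ
  have hμint : mconv μ ζ S = ∫⁻ q, F q.1 ∂γ := by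
    rw [hconv μ, ← hγ1, lintegral_map hF measurable_fst]
  have hνint : mconv ν ζ S = ∫⁻ q, F q.2 ∂γ := by
    rw [hconv ν, ← hγ2, lintegral_map hF measurable_snd]
  -- split over R and Rᶜ
  have hsplit : ∫⁻ q, F q.1 ∂γ = (∫⁻ q in R, F q.1 ∂γ) + ∫⁻ q in Rᶜ, F q.1 ∂γ :=
    (lintegral_add_compl _ hR).symm
  -- bound on R
  have honR : ∫⁻ q in R, F q.1 ∂γ
      ≤ ENNReal.ofReal (Real.exp ε) * ∫⁻ q, F q.2 ∂γ := by
    have hstep : ∫⁻ q in R, F q.1 ∂γ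
        ≤ ∫⁻ q in R, ENNReal.ofReal (Real.exp ε) * F q.2 ∂γ := by
      refine setLIntegral_mono (Measurable.const_mul (hF.comp measurable_snd) _) ?_
      intro q hq
      have hl1 : ∑ k, |q.1 k - q.2 k| ≤ W := by
        have := hRW q hq
        simpa [l1norm, Pi.sub_apply] using this
      exact lapPi_shift_bound hb hWb q.1 q.2 hl1 hS
    calc ∫⁻ q in R, F q.1 ∂γ
        ≤ ∫⁻ q in R, ENNReal.ofReal (Real.exp ε) * F q.2 ∂γ := hstep
      _ ≤ ∫⁻ q, ENNReal.ofReal (Real.exp ε) * F q.2 ∂γ :=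
          setLIntegral_le_lintegral _ _
      _ = ENNReal.ofReal (Real.exp ε) * ∫⁻ q, F q.2 ∂γ :=
          MeasureTheory.lintegral_const_mul' _ _ ENNReal.ofReal_ne_top
  -- bound on Rᶜ
  have hFle1 : ∀ x, F x ≤ 1 := by
    intro x
    calc F x ≤ ζ Set.univ := measure_mono (Set.subset_univ _)
      _ = 1 := lapPi_univ hb
  have honRc : ∫⁻ q in Rᶜ, F q.1 ∂γ ≤ ENNReal.ofReal δ := by
    calc ∫⁻ q in Rᶜ, F q.1 ∂γ ≤ ∫⁻ _ in Rᶜ, 1 ∂γ :=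
          lintegral_mono fun q => hFle1 q.1
      _ = γ Rᶜ := by simp
      _ = γ Set.univ - γ R := by
          rw [measure_compl hR (ne_top_of_le_ne_top
            (by rw [hγuniv]; exact ENNReal.one_ne_top)
            (measure_mono (Set.subset_univ R)))]
      _ ≤ 1 - ENNReal.ofReal (1 - δ) := by
          rw [hγuniv]
          exact tsub_le_tsub_left hRmass 1
      _ = ENNReal.ofReal δ := by
          rw [← ENNReal.ofReal_one, ← ENNReal.ofReal_sub _ (by linarith [hδ.2])]
          norm_num
  rw [hμint, hνint, hsplit]
  exact add_le_add honR honRc
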